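/- Let a,b > 0 and let u be continuous on cl(Ω), harmonic in Ω, C¹ on cl(Ω) minus the vertices of Γ with the mixed boundary data (a,b) on the open sides of Γ. Suppose that for some δ > 0 and c ≠ 0 one has u = c·ρ₁^{2/3}cos(2θ₁/3) + w on Ω ∩ B(S₁,δ), where w is C¹ on cl(Ω ∩ B(S₁,δ)) with w_x(S₁) < 0 and w_y(S₁) < 0. Then Berg's effect fails: if c > 0 there exists δ₁ > 0 such that u_x(x,r₂) > 0 (hence x·u_x(x,r₂) > 0) for all x ∈ (r₁−δ₁, r₁), and if c < 0 there exists δ₁ > 0 such that u_y(r₁,y) > 0 (hence y·u_y(r₁,y) > 0) for all y ∈ (r₂−δ₁, r₂). -/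

import Mathlib

open Set Real MeasureTheory

/-- Partial derivative in the `x` direction. -/
noncomputable def pdx (u : ℝ × ℝ → ℝ) (p : ℝ × ℝ) : ℝ := fderiv ℝ u p (1, 0)

/-- Partial derivative in the `y` direction. -/
noncomputable def pdy (u : ℝ × ℝ → ℝ) (p : ℝ × ℝ) : ℝ := fderiv ℝ u p (0, 1)

/-- Open rectangle `(-s,s) × (-t,t)`. -/
def Rect (s t : ℝ) : Set (ℝ × ℝ) := Ioo (-s) s ×ˢ Ioo (-t) t

/-- The domain `Ω = R₂ \ cl
 R₁` where `R₁ = (-r₁,r₁)×(-r₂,r₂)` and `R₂ = l • R₁`. -/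
def Dom (r₁ r₂ l : ℝ) : Set (ℝ × ℝ) :=
  Rect (l * r₁) (l * r₂) \ (Icc (-r₁) r₁ ×ˢ Icc (-r₂) r₂)

/-- The four vertices `S₁, S₂, S₃, S₄` of the inner rectangle. -/
def Verts (r₁ r₂ : ℝ) : Set (ℝ × ℝ) := {(r₁, r₂), (-r₁, r₂), (-r₁, -r₂), (r₁, -r₂)}

/-- The union of the four open sides of the inner boundary `Γ`. -/
def InnerSides (r₁ r₂ : ℝ) : Set (ℝ × ℝ) :=
  {p | (|p.1| < r₁ ∧ |p.2| = r₂) ∨ (|p.1| = r₁ ∧ |p.2| < r₂)}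

/-- `u` is (C² and) harmonic on `s`. -/
def IsHarmonicOn (u : ℝ × ℝ → ℝ) (s : Set (ℝ × ℝ)) : Prop :=
  ContDiffOn ℝ 2 u s ∧ ∀ p ∈ s, pdx (pdx u) p + pdy (pdy u) p = 0

/-- `g` coincides with the gradient of `u` on `s`. -/
def IsGradOn (u : ℝ × ℝ → ℝ) (g : ℝ × ℝ → ℝ × ℝ) (s : Set (ℝ × ℝ)) : Prop :=
  ∀ p ∈ s, g p = (pdx u p, pdy u p)

/-- Mixed boundary data `(a,b)` on the open sides of `Γ`, expressed through the
(extended) gradient `g`:  `u_y = -a` on `Γ₁`, `u_y = a` on `Γ₃`, `u_x = b` on `Γ₂`,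
`u_x = -b` on `Γ₄`. -/
def MixedData (r₁ r₂ a b : ℝ) (g : ℝ × ℝ → ℝ × ℝ) : Prop :=
  (∀ x ∈ Ioo (-r₁) r₁, (g (x, r₂)).2 = -a ∧ (g (x, -r₂)).2 = a) ∧
  (∀ y ∈ Ioo (-r₂) r₂, (g (-r₁, y)).1 = b ∧ (g (r₁, y)).1 = -b)

/-- `u` is symmetric (even in each variable) on `s`. -/
def IsSymmOn (u : ℝ × ℝ → ℝ) (s : Set (ℝ × ℝ)) : Prop :=
  ∀ x y : ℝ, (x, y) ∈ s → u (-x, y) = u (x, y) ∧ u (x, -y) = u (x, y)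

/-- `u` vanishes on the outer boundary `Γ̃ = ∂R₂`. -/
def VanishOuter (r₁ r₂ l : ℝ) (u : ℝ × ℝ → ℝ) : Prop :=
  ∀ p ∈ frontier (Rect (l * r₁) (l * r₂)), u p = 0

/-- Berg's effect: `x·u_x(x,r₂) ≤ 0` on `Γ₁` and `y·u_y(r₁,y) ≤ 0` on `Γ₄`,
expressed through the (extended) gradient `g`. -/
def BergEffect (r₁ r₂ : ℝ) (g : ℝ × ℝ → ℝ × ℝ) : Prop :=
  (∀ x ∈ Ioo (-r₁) r₁, x * (g (x, r₂)).1 ≤ 0) ∧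
  (∀ y ∈ Ioo (-r₂) r₂, y * (g (r₁, y)).2 ≤ 0)

/-- `u`, with gradient extension `g`, is a `C¹(cl Ω)` solution of the mixed problem
(harmonic in `Ω`, zero on `Γ̃`, mixed data `(a,b)` on the open sides of `Γ`,
`u` and `g` continuous up to the closure of `Ω`). -/
def IsC1Sol (r₁ r₂ l a b : ℝ) (u : ℝ × ℝ → ℝ) (g : ℝ × ℝ → ℝ × ℝ) : Prop :=
  ContinuousOn u (closure (Dom r₁ r₂ l)) ∧
  ContinuousOn g (closure (Dom r₁ r₂ l)) ∧
  IsGradOn u g (Dom r₁ r₂ l) ∧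
  IsHarmonicOn u (Dom r₁ r₂ l) ∧
  VanishOuter r₁ r₂ l u ∧
  MixedData r₁ r₂ a b g


section AuxStmt2

open Complex Filter Topology

noncomputable def Sc (r₁ r₂ : ℝ) : ℂ := ⟨r₁, r₂⟩

noncomputable def zc (r₁ r₂ : ℝ) (p : ℝ × ℝ) : ℂ := Complex.equivRealProdCLM.symm p - Sc r₁ r₂

lemma zc_re (r₁ r₂ : ℝ) (p : ℝ × ℝ) : (zc r₁ r₂ p).re = p.1 - r₁ := by
  simp [zc, Sc, Complex.equivRealProdCLM_symm_apply]

lemma zc_im (r₁ r₂ : ℝ) (p : ℝ × ℝ) : (zc r₁ r₂ p).im = p.2 - r₂ := by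
  simp [zc, Sc, Complex.equivRealProdCLM_symm_apply]

lemma zc_cont (r₁ r₂ : ℝ) : Continuous (zc r₁ r₂) := by unfold zc; fun_prop

noncomputable def sig (r₁ r₂ : ℝ) (p : ℝ × ℝ) : ℝ :=
  (Complex.exp (π/3 * Complex.I) * zc r₁ r₂ p ^ ((2:ℂ)/3)).re

noncomputable def Dc (r₁ r₂ : ℝ) (p : ℝ × ℝ) : ℂ :=
  Complex.exp (π/3 * Complex.I) * ((2:ℂ)/3 * zc r₁ r₂ p ^ ((2:ℂ)/3 - 1))

lemma dom_open (r₁ r₂ l : ℝ) : IsOpen (Dom r₁ r₂ l) :=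
  ((isOpen_Ioo.prod isOpen_Ioo).sdiff (isClosed_Icc.prod isClosed_Icc))

lemma side_of_mem (r₁ r₂ l δ' : ℝ) (hr₁ : 0 < r₁) (hr₂ : 0 < r₂)
    (h1 : δ' ≤ r₁) (h2 : δ' ≤ r₂) (p : ℝ × ℝ)
    (hp : p ∈ Dom r₁ r₂ l ∩ Metric.ball (r₁, r₂) δ') :
    r₁ < p.1 ∨ r₂ < p.2 := by
  obtain ⟨⟨-, hnot⟩, hball⟩ := hp
  rw [Metric.mem_ball, Prod.dist_eq] at hball
  have hd1 : |p.1 - r₁| < δ' := lt_of_le_of_lt (le_max_left _ _) hball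
  have hd2 : |p.2 - r₂| < δ' := lt_of_le_of_lt (le_max_right _ _) hball
  rw [abs_lt] at hd1 hd2
  simp only [Set.mem_prod, Set.mem_Icc, not_and_or, not_le] at hnot
  rcases hnot with (h | h) | (h | h)
  · linarith
  · exact Or.inl h
  · linarith
  · exact Or.inr h

lemma sig_hasFDerivAt (r₁ r₂ : ℝ) (p : ℝ × ℝ) (h : zc r₁ r₂ p ∈ Complex.slitPlane) :
    ∃ L : ℝ × ℝ →L[ℝ] ℝ, HasFDerivAt (sig r₁ r₂) L p ∧
      L (1,0) = (Dc r₁ r₂ p).re ∧ L (0,1) = (Dc r₁ r₂ p * Complex.I).re := by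
  have hzc : HasFDerivAt (zc r₁ r₂)
      (Complex.equivRealProdCLM.symm : ℝ × ℝ →L[ℝ] ℂ) p :=
    (Complex.equivRealProdCLM.symm.hasFDerivAt).sub_const (Sc r₁ r₂)
  have hF : HasDerivAt (fun z : ℂ => Complex.exp (π/3 * Complex.I) * z ^ ((2:ℂ)/3))
      (Dc r₁ r₂ p) (zc r₁ r₂ p) := by
    have := ((Complex.hasStrictDerivAt_cpow_const (c := (2:ℂ)/3) h).hasDerivAt).const_mul
      (Complex.exp (π/3 * Complex.I))
    simpa [Dc, mul_comm, mul_assoc, mul_left_comm] using this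
  have hFf : HasFDerivAt (fun z : ℂ => Complex.exp (π/3 * Complex.I) * z ^ ((2:ℂ)/3))
      ((ContinuousLinearMap.smulRight (1 : ℂ →L[ℂ] ℂ) (Dc r₁ r₂ p)).restrictScalars ℝ)
      (zc r₁ r₂ p) := hF.hasFDerivAt.restrictScalars ℝ
  refine ⟨Complex.reCLM.comp
      (((ContinuousLinearMap.smulRight (1 : ℂ →L[ℂ] ℂ) (Dc r₁ r₂ p)).restrictScalars ℝ).comp
      (Complex.equivRealProdCLM.symm : ℝ × ℝ →L[ℝ] ℂ)), ?_, ?_, ?_⟩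
  · exact Complex.reCLM.hasFDerivAt.comp p (hFf.comp p hzc)
  · simp [mul_comm, Complex.equivRealProdCLM_symm_apply]
  · simp [Complex.equivRealProdCLM_symm_apply, mul_comm]

lemma sig_polar (r₁ r₂ : ℝ) (p : ℝ × ℝ) (hz : zc r₁ r₂ p ≠ 0) :
    sig r₁ r₂ p = ‖zc r₁ r₂ p‖ ^ ((2:ℝ)/3) *
      Real.cos (2 * (Complex.arg (zc r₁ r₂ p) + π/2) / 3) := by
  set z := zc r₁ r₂ p with hzdef
  have hρ : 0 < ‖z‖ := norm_pos_iff.mpr hz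
  rw [sig, ← hzdef, Complex.cpow_def_of_ne_zero hz, ← Complex.exp_add, Complex.exp_re]
  have hre : (↑π / 3 * Complex.I + Complex.log z * (2 / 3)).re
      = Real.log ‖z‖ * (2/3) := by
    simp [Complex.add_re, Complex.mul_re, Complex.log_re, Complex.log_im]
  have him : (↑π / 3 * Complex.I + Complex.log z * (2 / 3)).im
      = π/3 + Complex.arg z * (2/3) := by
    simp [Complex.add_im, Complex.mul_im, Complex.log_re, Complex.log_im]
  rw [hre, him, ← Real.rpow_def_of_pos hρ]
  congr 1
  ring_nf

lemma rep (r₁ r₂ l δ c : ℝ) (u w : ℝ × ℝ → ℝ)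
    (hdecomp : ∀ ρ θ : ℝ, 0 < ρ → 0 ≤ θ → θ ≤ 3 * π / 2 →
      (r₁ + ρ * Real.sin θ, r₂ - ρ * Real.cos θ) ∈ Dom r₁ r₂ l ∩ Metric.ball (r₁, r₂) δ →
      u (r₁ + ρ * Real.sin θ, r₂ - ρ * Real.cos θ) =
        c * ρ ^ ((2 : ℝ) / 3) * Real.cos (2 * θ / 3) +
          w (r₁ + ρ * Real.sin θ, r₂ - ρ * Real.cos θ))
    (p : ℝ × ℝ) (hp : p ∈ Dom r₁ r₂ l ∩ Metric.ball (r₁, r₂) δ)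
    (hside : r₁ < p.1 ∨ r₂ < p.2) : u p = c * sig r₁ r₂ p + w p := by
  set z := zc r₁ r₂ p with hzdef
  have hz : z ≠ 0 := by
    intro h
    rcases hside with h1 | h1
    · have := zc_re r₁ r₂ p; rw [← hzdef, h] at this; simp at this; linarith
    · have := zc_im r₁ r₂ p; rw [← hzdef, h] at this; simp at this; linarith
  set ρ := ‖z‖ with hρdef
  set θ := Complex.arg z + π/2 with hθdef
  clear_value θ ρ z
  have hρ : 0 < ρ := hρdef ▸ norm_pos_iff.mpr hz
  have hθ0 : 0 ≤ θ := by
    have h : -(π/2) ≤ Complex.arg z := by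
      rw [Complex.neg_pi_div_two_le_arg_iff]
      rcases hside with h1 | h1
      · left; rw [hzdef, zc_re]; linarith
      · right; rw [hzdef, zc_im]; linarith
    linarith
  have hθ1 : θ ≤ 3 * π / 2 := by have := Complex.arg_le_pi z; linarith
  have hpt : (r₁ + ρ * Real.sin θ, r₂ - ρ * Real.cos θ) = p := by
    have h1 : ρ * Real.sin θ = z.re := by
      rw [hθdef, Real.sin_add_pi_div_two, hρdef, Complex.norm_mul_cos_arg]
    have h2 : ρ * Real.cos θ = -z.im := by
      rw [hθdef, Real.cos_add_pi_div_two, hρdef, mul_neg, Complex.norm_mul_sin_arg]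
    have e1 := zc_re r₁ r₂ p
    have e2 := zc_im r₁ r₂ p
    rw [← hzdef] at e1 e2
    ext
    · simp only; rw [h1, e1]; ring
    · simp only; rw [h2, e2]; ring
  have hdec := hdecomp ρ θ hρ hθ0 hθ1 (by rw [hpt]; exact hp)
  rw [hpt] at hdec
  rw [hdec, sig_polar _ _ _ (hzdef ▸ hz), ← hzdef, ← hρdef, hθdef]
  ring

lemma grad_id (r₁ r₂ l δ δ' c : ℝ) (hr₁ : 0 < r₁) (hr₂ : 0 < r₂)
    (hδ'δ : δ' ≤ δ) (h2 : δ' ≤ r₁) (h3 : δ' ≤ r₂)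
    (u w : ℝ × ℝ → ℝ) (g gw : ℝ × ℝ → ℝ × ℝ)
    (hC2 : ContDiffOn ℝ 2 u (Dom r₁ r₂ l))
    (hgrad : IsGradOn u g (Dom r₁ r₂ l))
    (hgradw : IsGradOn w gw (Dom r₁ r₂ l ∩ Metric.ball (r₁, r₂) δ))
    (hdecomp : ∀ ρ θ : ℝ, 0 < ρ → 0 ≤ θ → θ ≤ 3 * π / 2 →
      (r₁ + ρ * Real.sin θ, r₂ - ρ * Real.cos θ) ∈ Dom r₁ r₂ l ∩ Metric.ball (r₁, r₂) δ →
      u (r₁ + ρ * Real.sin θ, r₂ - ρ * Real.cos θ) =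
        c * ρ ^ ((2 : ℝ) / 3) * Real.cos (2 * θ / 3) +
          w (r₁ + ρ * Real.sin θ, r₂ - ρ * Real.cos θ))
    (p : ℝ × ℝ) (hp : p ∈ Dom r₁ r₂ l ∩ Metric.ball (r₁, r₂) δ') :
    (g p).1 = c * (Dc r₁ r₂ p).re + (gw p).1 ∧
    (g p).2 = c * (Dc r₁ r₂ p * Complex.I).re + (gw p).2 := by
  have hO : IsOpen (Dom r₁ r₂ l ∩ Metric.ball (r₁, r₂) δ') :=
    (dom_open r₁ r₂ l).inter Metric.isOpen_ball
  have hpD := hp.1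
  have hside := side_of_mem r₁ r₂ l δ' hr₁ hr₂ h2 h3 p hp
  have hslit : zc r₁ r₂ p ∈ Complex.slitPlane := by
    rw [Complex.mem_slitPlane_iff, zc_re, zc_im]
    rcases hside with h | h
    · left; linarith
    · right; intro hcon; linarith [sub_eq_zero.mp hcon]
  obtain ⟨L, hL, hL1, hL2⟩ := sig_hasFDerivAt r₁ r₂ p hslit
  have hball : p ∈ Metric.ball ((r₁ : ℝ), (r₂ : ℝ)) δ := Metric.ball_subset_ball hδ'δ hp.2
  have hu_diff : DifferentiableAt ℝ u p :=
    (hC2.differentiableOn (by norm_num)).differentiableAt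
      ((dom_open r₁ r₂ l).mem_nhds hpD)
  have hev : w =ᶠ[nhds p] fun q => u q - c * sig r₁ r₂ q := by
    filter_upwards [hO.mem_nhds hp] with q hq
    have hsq := side_of_mem r₁ r₂ l δ' hr₁ hr₂ h2 h3 q hq
    have := rep r₁ r₂ l δ c u w hdecomp q
      ⟨hq.1, Metric.ball_subset_ball hδ'δ hq.2⟩ hsq
    linarith
  have hw_fd : HasFDerivAt w (fderiv ℝ u p - c • L) p := by
    have h1 : HasFDerivAt (fun q => u q - c * sig r₁ r₂ q) (fderiv ℝ u p - c • L) p := by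
      have := (hu_diff.hasFDerivAt).sub (hL.const_smul c)
      exact this
    exact h1.congr_of_eventuallyEq hev
  have hgw := hgradw p ⟨hpD, hball⟩
  have hgp := hgrad p hpD
  have hfd := hw_fd.fderiv
  constructor
  · rw [hgp, hgw]
    simp only [pdx]
    rw [hfd]
    simp [ContinuousLinearMap.sub_apply, ContinuousLinearMap.smul_apply, hL1, smul_eq_mul]
  · rw [hgp, hgw]
    simp only [pdy]
    rw [hfd]
    simp [ContinuousLinearMap.sub_apply, ContinuousLinearMap.smul_apply, hL2, smul_eq_mul]

lemma tendsto_Dc_horiz (r₁ r₂ x₀ : ℝ) (ht₀ : 0 < r₁ - x₀) :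
    Tendsto (fun t : ℝ => (Dc r₁ r₂ (x₀, r₂ + t)).re) (nhdsWithin 0 (Ioi 0))
      (nhds (2/3 * (r₁ - x₀) ^ (-(1:ℝ)/3))) := by
  set t₀ := r₁ - x₀ with ht₀def
  set ζ : ℝ → ℂ := fun t => zc r₁ r₂ (x₀, r₂ + t) with hζdef
  have hζ0 : ζ 0 = ((x₀ - r₁ : ℝ) : ℂ) := by
    apply Complex.ext
    · rw [hζdef]; simp [zc_re]
    · rw [hζdef]; simp [zc_im]
  have h1 : Tendsto ζ (nhdsWithin 0 (Ioi 0))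
      (nhdsWithin (((x₀ - r₁ : ℝ) : ℂ)) {z : ℂ | 0 ≤ z.im}) := by
    rw [tendsto_nhdsWithin_iff]
    constructor
    · rw [← hζ0]
      exact (((zc_cont r₁ r₂).comp
        (by fun_prop : Continuous fun t : ℝ => ((x₀ , r₂ + t) : ℝ × ℝ))).tendsto 0).mono_left
        nhdsWithin_le_nhds
    · filter_upwards [self_mem_nhdsWithin] with t ht
      simp only [Set.mem_setOf_eq, hζdef, zc_im]
      simp only [Set.mem_Ioi] at ht
      linarith
  have h2 : Tendsto (fun t => Complex.log (ζ t)) (nhdsWithin 0 (Ioi 0))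
      (nhds ((Real.log t₀ : ℂ) + π * Complex.I)) := by
    have hre : ((x₀ - r₁ : ℝ) : ℂ).re < 0 := by simp; linarith
    have him : ((x₀ - r₁ : ℝ) : ℂ).im = 0 := by simp
    have := (Complex.tendsto_log_nhdsWithin_im_nonneg_of_re_neg_of_im_zero hre him).comp h1
    have habs : ‖((x₀ - r₁ : ℝ) : ℂ)‖ = t₀ := by
      rw [Complex.norm_real, Real.norm_eq_abs, abs_of_neg (by linarith)]; ring
    rwa [habs] at this
  have h3 : Tendsto (fun t : ℝ => (Complex.exp (π/3 * Complex.I) *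
        ((2:ℂ)/3 * Complex.exp (Complex.log (ζ t) * ((2:ℂ)/3 - 1)))).re)
      (nhdsWithin 0 (Ioi 0))
      (nhds ((Complex.exp (π/3 * Complex.I) *
        ((2:ℂ)/3 * Complex.exp (((Real.log t₀ : ℂ) + π * Complex.I) * ((2:ℂ)/3 - 1)))).re)) := by
    have hc : Continuous (fun z : ℂ => (Complex.exp (π/3 * Complex.I) *
        ((2:ℂ)/3 * Complex.exp (z * ((2:ℂ)/3 - 1)))).re) := by fun_prop
    exact (hc.tendsto _).comp h2
  have heq : ∀ᶠ t in nhdsWithin (0:ℝ) (Ioi 0),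
      (Complex.exp (π/3 * Complex.I) *
        ((2:ℂ)/3 * Complex.exp (Complex.log (ζ t) * ((2:ℂ)/3 - 1)))).re
      = (Dc r₁ r₂ (x₀, r₂ + t)).re := by
    filter_upwards [self_mem_nhdsWithin] with t ht
    simp only [Set.mem_Ioi] at ht
    have hz : ζ t ≠ 0 := by
      intro h
      have : (ζ t).im = t := by rw [hζdef]; simp [zc_im]
      rw [h] at this; simp at this; linarith
    rw [Dc, Complex.cpow_def_of_ne_zero hz]
  have hval : (Complex.exp (π/3 * Complex.I) *
        ((2:ℂ)/3 * Complex.exp (((Real.log t₀ : ℂ) + π * Complex.I) * ((2:ℂ)/3 - 1)))).re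
      = 2/3 * t₀ ^ (-(1:ℝ)/3) := by
    have hcomb : Complex.exp (π/3 * Complex.I) *
        ((2:ℂ)/3 * Complex.exp (((Real.log t₀ : ℂ) + π * Complex.I) * ((2:ℂ)/3 - 1)))
        = (2:ℂ)/3 * Complex.exp ((π/3 * Complex.I)
            + ((Real.log t₀ : ℂ) + π * Complex.I) * ((2:ℂ)/3 - 1)) := by
      rw [Complex.exp_add]; ring
    have hexp : ((π:ℂ)/3 * Complex.I) + ((Real.log t₀ : ℂ) + π * Complex.I) * ((2:ℂ)/3 - 1)
        = ((Real.log t₀ * (-1/3) : ℝ) : ℂ) := by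
      push_cast; ring
    rw [hcomb, hexp, ← Complex.ofReal_exp]
    rw [← Real.rpow_def_of_pos ht₀]
    norm_num [Complex.mul_re]
  rw [← hval]
  exact Tendsto.congr' heq h3

lemma tendsto_Dc_vert (r₁ r₂ y₀ : ℝ) (hs₀ : 0 < r₂ - y₀) :
    Tendsto (fun t : ℝ => (Dc r₁ r₂ (r₁ + t, y₀) * Complex.I).re) (nhdsWithin 0 (Ioi 0))
      (nhds (-(2/3) * (r₂ - y₀) ^ (-(1:ℝ)/3))) := by
  set s₀ := r₂ - y₀ with hs₀def
  set ζ : ℝ → ℂ := fun t => zc r₁ r₂ (r₁ + t, y₀) with hζdef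
  have hζre : ∀ t, (ζ t).re = t := by intro t; rw [hζdef]; simp [zc_re]
  have hζim : ∀ t, (ζ t).im = y₀ - r₂ := by intro t; rw [hζdef]; simp [zc_im]
  have hslit : ζ 0 ∈ Complex.slitPlane := by
    rw [Complex.mem_slitPlane_iff]
    right; rw [hζim]; intro h; linarith [sub_eq_zero.mp h]
  have habs : ‖ζ 0‖ = s₀ := by
    have : ζ 0 = -((s₀ : ℝ) : ℂ) * Complex.I := by
      apply Complex.ext
      · rw [hζre]; simp
      · rw [hζim]; simp; ring
    rw [this]
    simp [abs_of_pos hs₀]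
  have harg : Complex.arg (ζ 0) = -(π/2) := by
    rw [Complex.arg_eq_neg_pi_div_two_iff]
    exact ⟨hζre 0, by rw [hζim]; linarith⟩
  have hlog : Complex.log (ζ 0) = ((Real.log s₀ : ℝ) : ℂ) + ((-(π/2) : ℝ) : ℂ) * Complex.I := by
    apply Complex.ext
    · simp [Complex.log_re, habs]
    · simp [Complex.log_im, harg]
  have h1 : Tendsto ζ (nhdsWithin 0 (Ioi 0)) (nhds (ζ 0)) :=
    (((zc_cont r₁ r₂).comp
      (by fun_prop : Continuous fun t : ℝ => ((r₁ + t, y₀) : ℝ × ℝ))).tendsto 0).mono_left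
      nhdsWithin_le_nhds
  have h2 : Tendsto (fun t => Complex.log (ζ t)) (nhdsWithin 0 (Ioi 0))
      (nhds (((Real.log s₀ : ℝ) : ℂ) + ((-(π/2) : ℝ) : ℂ) * Complex.I)) := by
    have := ((continuousAt_clog hslit).tendsto).comp h1
    rwa [hlog] at this
  have h3 : Tendsto (fun t : ℝ => (Complex.exp (π/3 * Complex.I) *
        ((2:ℂ)/3 * Complex.exp (Complex.log (ζ t) * ((2:ℂ)/3 - 1))) * Complex.I).re)
      (nhdsWithin 0 (Ioi 0))
      (nhds ((Complex.exp (π/3 * Complex.I) *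
        ((2:ℂ)/3 * Complex.exp ((((Real.log s₀ : ℝ) : ℂ)
          + ((-(π/2) : ℝ) : ℂ) * Complex.I) * ((2:ℂ)/3 - 1))) * Complex.I).re)) := by
    have hc : Continuous (fun z : ℂ => (Complex.exp (π/3 * Complex.I) *
        ((2:ℂ)/3 * Complex.exp (z * ((2:ℂ)/3 - 1))) * Complex.I).re) := by fun_prop
    exact (hc.tendsto _).comp h2
  have heq : ∀ᶠ t in nhdsWithin (0:ℝ) (Ioi 0),
      (Complex.exp (π/3 * Complex.I) *
        ((2:ℂ)/3 * Complex.exp (Complex.log (ζ t) * ((2:ℂ)/3 - 1))) * Complex.I).re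
      = (Dc r₁ r₂ (r₁ + t, y₀) * Complex.I).re := by
    filter_upwards [self_mem_nhdsWithin] with t ht
    simp only [Set.mem_Ioi] at ht
    have hz : ζ t ≠ 0 := by
      intro h
      have := hζre t
      rw [h] at this; simp at this; linarith
    rw [Dc, Complex.cpow_def_of_ne_zero hz]
  have hval : (Complex.exp (π/3 * Complex.I) *
        ((2:ℂ)/3 * Complex.exp ((((Real.log s₀ : ℝ) : ℂ)
          + ((-(π/2) : ℝ) : ℂ) * Complex.I) * ((2:ℂ)/3 - 1))) * Complex.I).re
      = -(2/3) * s₀ ^ (-(1:ℝ)/3) := by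
    have hcomb : Complex.exp (π/3 * Complex.I) *
        ((2:ℂ)/3 * Complex.exp ((((Real.log s₀ : ℝ) : ℂ)
          + ((-(π/2) : ℝ) : ℂ) * Complex.I) * ((2:ℂ)/3 - 1))) * Complex.I
        = (2:ℂ)/3 * Complex.exp ((π/3 * Complex.I) + ((((Real.log s₀ : ℝ) : ℂ)
          + ((-(π/2) : ℝ) : ℂ) * Complex.I) * ((2:ℂ)/3 - 1))) * Complex.I := by
      rw [Complex.exp_add]; ring
    have hexp : ((π:ℂ)/3 * Complex.I) + ((((Real.log s₀ : ℝ) : ℂ)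
          + ((-(π/2) : ℝ) : ℂ) * Complex.I) * ((2:ℂ)/3 - 1))
        = ((Real.log s₀ * (-1/3) : ℝ) : ℂ) + ((π/2 : ℝ) : ℂ) * Complex.I := by
      push_cast; ring
    rw [hcomb, hexp, Real.rpow_def_of_pos hs₀]
    norm_num [Complex.mul_re, Complex.mul_im, Complex.exp_re, Complex.exp_im]
  rw [← hval]
  exact Tendsto.congr' heq h3

lemma not_vert_of_lt (r₁ r₂ x₀ : ℝ) (hr₂ : 0 < r₂) (h0 : 0 < x₀) (h1 : x₀ < r₁) :
    ((x₀, r₂) : ℝ × ℝ) ∉ Verts r₁ r₂ := by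
  intro hv
  simp only [Verts, Set.mem_insert_iff, Set.mem_singleton_iff, Prod.mk.injEq] at hv
  rcases hv with ⟨h,_⟩|⟨h,_⟩|⟨_,h⟩|⟨_,h⟩ <;> linarith

lemma not_vert_of_lt' (r₁ r₂ y₀ : ℝ) (hr₁ : 0 < r₁) (h0 : 0 < y₀) (h1 : y₀ < r₂) :
    ((r₁, y₀) : ℝ × ℝ) ∉ Verts r₁ r₂ := by
  intro hv
  simp only [Verts, Set.mem_insert_iff, Set.mem_singleton_iff, Prod.mk.injEq] at hv
  rcases hv with ⟨_,h⟩|⟨h,_⟩|⟨h,_⟩|⟨_,h⟩ <;> linarith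

lemma case_pos (r₁ r₂ l δ c : ℝ) (hr₁ : 0 < r₁) (hr₂ : 0 < r₂) (hl : 1 < l)
    (hδ : 0 < δ)
    (u w : ℝ × ℝ → ℝ) (g gw : ℝ × ℝ → ℝ × ℝ)
    (hC2 : ContDiffOn ℝ 2 u (Dom r₁ r₂ l))
    (hg : ContinuousOn g (closure (Dom r₁ r₂ l) \ Verts r₁ r₂))
    (hgrad : IsGradOn u g (Dom r₁ r₂ l))
    (hgw : ContinuousOn gw (closure (Dom r₁ r₂ l ∩ Metric.ball (r₁, r₂) δ)))
    (hgradw : IsGradOn w gw (Dom r₁ r₂ l ∩ Metric.ball (r₁, r₂) δ))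
    (hdecomp : ∀ ρ θ : ℝ, 0 < ρ → 0 ≤ θ → θ ≤ 3 * π / 2 →
      (r₁ + ρ * Real.sin θ, r₂ - ρ * Real.cos θ) ∈ Dom r₁ r₂ l ∩ Metric.ball (r₁, r₂) δ →
      u (r₁ + ρ * Real.sin θ, r₂ - ρ * Real.cos θ) =
        c * ρ ^ ((2 : ℝ) / 3) * Real.cos (2 * θ / 3) +
          w (r₁ + ρ * Real.sin θ, r₂ - ρ * Real.cos θ))
    (hcpos : 0 < c) :
    ∃ δ₁ > 0, ∀ x ∈ Ioo (r₁ - δ₁) r₁, 0 < (g (x, r₂)).1 ∧ 0 < x * (g (x, r₂)).1 := by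
  set δ' := min δ (min r₁ r₂) with hδ'def
  have hδ'pos : 0 < δ' := lt_min hδ (lt_min hr₁ hr₂)
  have hδ'δ : δ' ≤ δ := min_le_left _ _
  have hδ'r₁ : δ' ≤ r₁ := (min_le_right _ _).trans (min_le_left _ _)
  have hδ'r₂ : δ' ≤ r₂ := (min_le_right _ _).trans (min_le_right _ _)
  set tb := min (δ'/2) ((l-1)*r₂) with htbdef
  have htb : 0 < tb := lt_min (by linarith) (mul_pos (by linarith) hr₂)
  have hIoo : Ioo (0:ℝ) tb ∈ nhdsWithin (0:ℝ) (Ioi 0) :=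
    Ioo_mem_nhdsGT_of_mem ⟨le_refl 0, htb⟩
  have hmem : ∀ x₀, r₁ - δ'/2 < x₀ → x₀ ≤ r₁ → ∀ t ∈ Ioo (0:ℝ) tb,
      ((x₀, r₂ + t) : ℝ × ℝ) ∈ Dom r₁ r₂ l ∩ Metric.ball (r₁, r₂) δ' := by
    intro x₀ hx₁ hx₂ t ht
    obtain ⟨ht0, ht1⟩ := ht
    have ht1a : t < δ'/2 := lt_of_lt_of_le ht1 (min_le_left _ _)
    have ht1b : t < (l-1)*r₂ := lt_of_lt_of_le ht1 (min_le_right _ _)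
    have hlr₁ : r₁ < l * r₁ := by nlinarith
    have hlr₂ : r₂ < l * r₂ := by nlinarith
    refine ⟨⟨⟨⟨by linarith, by linarith⟩, ?_, ?_⟩, ?_⟩, ?_⟩
    · show -(l * r₂) < r₂ + t; linarith
    · show r₂ + t < l * r₂; linarith
    · intro hcon
      have h2 : r₂ + t ≤ r₂ := hcon.2.2
      linarith
    · rw [Metric.mem_ball, Prod.dist_eq]
      apply max_lt
      · show dist x₀ r₁ < δ'
        rw [Real.dist_eq, abs_lt]; constructor <;> linarith
      · show dist (r₂ + t) r₂ < δ'
        rw [Real.dist_eq, abs_lt]; constructor <;> linarith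
  have hFt : ∀ x₀ : ℝ, Filter.Tendsto (fun t : ℝ => ((x₀, r₂ + t) : ℝ × ℝ))
      (nhdsWithin 0 (Ioi 0)) (nhds (x₀, r₂)) := by
    intro x₀
    have hc : Continuous (fun t : ℝ => ((x₀, r₂ + t) : ℝ × ℝ)) := by fun_prop
    have h0 : Filter.Tendsto (fun t : ℝ => ((x₀, r₂ + t) : ℝ × ℝ)) (nhdsWithin 0 (Ioi 0))
        (nhds (x₀, r₂ + 0)) := (hc.tendsto 0).mono_left nhdsWithin_le_nhds
    simpa using h0
  have hclos : ∀ x₀, r₁ - δ'/2 < x₀ → x₀ ≤ r₁ →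
      ((x₀, r₂) : ℝ × ℝ) ∈ closure (Dom r₁ r₂ l ∩ Metric.ball (r₁, r₂) δ) := by
    intro x₀ h1 h2
    refine mem_closure_of_tendsto (hFt x₀) ?_
    filter_upwards [hIoo] with t ht
    exact ⟨(hmem x₀ h1 h2 t ht).1, Metric.ball_subset_ball hδ'δ (hmem x₀ h1 h2 t ht).2⟩
  have hclosD : ∀ x₀, r₁ - δ'/2 < x₀ → x₀ ≤ r₁ →
      ((x₀, r₂) : ℝ × ℝ) ∈ closure (Dom r₁ r₂ l) := by
    intro x₀ h1 h2
    refine mem_closure_of_tendsto (hFt x₀) ?_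
    filter_upwards [hIoo] with t ht
    exact (hmem x₀ h1 h2 t ht).1
  have key : ∀ x₀, r₁ - δ'/2 < x₀ → x₀ < r₁ →
      (g (x₀, r₂)).1 = c * (2/3 * (r₁ - x₀) ^ (-(1:ℝ)/3)) + (gw (x₀, r₂)).1 := by
    intro x₀ h1 h2
    have hx₀pos : 0 < x₀ := by linarith
    have hT1 : Filter.Tendsto (fun t => (g (x₀, r₂ + t)).1) (nhdsWithin 0 (Ioi 0))
        (nhds ((g (x₀, r₂)).1)) := by
      have hmemq : ((x₀, r₂) : ℝ × ℝ) ∈ closure (Dom r₁ r₂ l) \ Verts r₁ r₂ :=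
        ⟨hclosD x₀ h1 h2.le, not_vert_of_lt r₁ r₂ x₀ hr₂ hx₀pos h2⟩
      have hmap : Filter.Tendsto (fun t : ℝ => ((x₀, r₂ + t) : ℝ × ℝ))
          (nhdsWithin 0 (Ioi 0))
          (nhdsWithin (x₀, r₂) (closure (Dom r₁ r₂ l) \ Verts r₁ r₂)) := by
        rw [tendsto_nhdsWithin_iff]
        refine ⟨hFt x₀, ?_⟩
        filter_upwards [hIoo] with t ht
        refine ⟨subset_closure (hmem x₀ h1 h2.le t ht).1, ?_⟩
        intro hv
        simp only [Verts, Set.mem_insert_iff, Set.mem_singleton_iff, Prod.mk.injEq] at hv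
        obtain ⟨ht0, -⟩ := ht
        rcases hv with ⟨_,h⟩|⟨_,h⟩|⟨_,h⟩|⟨_,h⟩ <;> linarith
      exact (continuous_fst.tendsto _).comp ((hg _ hmemq).tendsto.comp hmap)
    have hT2 : Filter.Tendsto (fun t => (gw (x₀, r₂ + t)).1) (nhdsWithin 0 (Ioi 0))
        (nhds ((gw (x₀, r₂)).1)) := by
      have hmap : Filter.Tendsto (fun t : ℝ => ((x₀, r₂ + t) : ℝ × ℝ))
          (nhdsWithin 0 (Ioi 0))
          (nhdsWithin (x₀, r₂) (closure (Dom r₁ r₂ l ∩ Metric.ball (r₁, r₂) δ))) := by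
        rw [tendsto_nhdsWithin_iff]
        refine ⟨hFt x₀, ?_⟩
        filter_upwards [hIoo] with t ht
        exact subset_closure ⟨(hmem x₀ h1 h2.le t ht).1,
          Metric.ball_subset_ball hδ'δ (hmem x₀ h1 h2.le t ht).2⟩
      exact (continuous_fst.tendsto _).comp ((hgw _ (hclos x₀ h1 h2.le)).tendsto.comp hmap)
    have hT3 := tendsto_Dc_horiz r₁ r₂ x₀ (by linarith)
    have hR : Filter.Tendsto (fun t => c * (Dc r₁ r₂ (x₀, r₂ + t)).re + (gw (x₀, r₂ + t)).1)
        (nhdsWithin 0 (Ioi 0))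
        (nhds (c * (2/3 * (r₁ - x₀) ^ (-(1:ℝ)/3)) + (gw (x₀, r₂)).1)) :=
      (hT3.const_mul c).add hT2
    have heqev : ∀ᶠ t in nhdsWithin (0:ℝ) (Ioi 0),
        (g (x₀, r₂ + t)).1 = c * (Dc r₁ r₂ (x₀, r₂ + t)).re + (gw (x₀, r₂ + t)).1 := by
      filter_upwards [hIoo] with t ht
      exact (grad_id r₁ r₂ l δ δ' c hr₁ hr₂ hδ'δ hδ'r₁ hδ'r₂ u w g gw hC2 hgrad hgradw
        hdecomp _ (hmem x₀ h1 h2.le t ht)).1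
    exact tendsto_nhds_unique hT1
      (hR.congr' (by filter_upwards [heqev] with t h; exact h.symm))
  have hS₁ : ((r₁, r₂) : ℝ × ℝ) ∈ closure (Dom r₁ r₂ l ∩ Metric.ball (r₁, r₂) δ) :=
    hclos r₁ (by linarith) le_rfl
  have hcw := hgw _ hS₁
  rw [Metric.continuousWithinAt_iff] at hcw
  obtain ⟨η, hη, hcw⟩ := hcw 1 one_pos
  set M := |(gw ((r₁ : ℝ), (r₂ : ℝ))).1| + 1 with hMdef
  have hM : 0 < M := by positivity
  set K := (2*c/(3*M))^(3:ℕ) with hKdef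
  have hApos : 0 < 2*c/(3*M) := by positivity
  have hK : 0 < K := by positivity
  refine ⟨min (δ'/2) (min η K), by positivity, ?_⟩
  rintro x ⟨hx1, hx2⟩
  have hδ₁a : min (δ'/2) (min η K) ≤ δ'/2 := min_le_left _ _
  have hδ₁b : min (δ'/2) (min η K) ≤ η := (min_le_right _ _).trans (min_le_left _ _)
  have hδ₁c : min (δ'/2) (min η K) ≤ K := (min_le_right _ _).trans (min_le_right _ _)
  have ht₀pos : 0 < r₁ - x := by linarith
  have hxδ' : r₁ - δ'/2 < x := by linarith
  have hkey := key x hxδ' hx2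
  have hmemq2 := hclos x hxδ' hx2.le
  have hdistq : dist ((x, r₂) : ℝ × ℝ) ((r₁ : ℝ), (r₂ : ℝ)) < η := by
    rw [Prod.dist_eq]
    apply max_lt
    · rw [Real.dist_eq, abs_lt]; constructor <;> linarith
    · simp [hη]
  have hgwb := hcw hmemq2 hdistq
  have hgwb1 : |(gw ((x : ℝ), (r₂ : ℝ))).1 - (gw ((r₁ : ℝ), (r₂ : ℝ))).1| < 1 := by
    calc |(gw ((x : ℝ), (r₂ : ℝ))).1 - (gw ((r₁ : ℝ), (r₂ : ℝ))).1|
        = dist ((gw ((x : ℝ), (r₂ : ℝ))).1) ((gw ((r₁ : ℝ), (r₂ : ℝ))).1) := (Real.dist_eq _ _).symm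
      _ ≤ dist (gw ((x : ℝ), (r₂ : ℝ))) (gw ((r₁ : ℝ), (r₂ : ℝ))) := by
          rw [Prod.dist_eq]; exact le_max_left _ _
      _ < 1 := hgwb
  have hgwlb : -M ≤ (gw ((x : ℝ), (r₂ : ℝ))).1 := by
    have h1 := (abs_lt.mp hgwb1).1
    have h2 := neg_abs_le ((gw ((r₁ : ℝ), (r₂ : ℝ))).1)
    rw [hMdef]; linarith
  have ht₀K : r₁ - x < K := by linarith
  have hrpos : (0:ℝ) < (r₁ - x) ^ ((1:ℝ)/3) := Real.rpow_pos_of_pos ht₀pos _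
  have hcub : (r₁ - x) ^ ((1:ℝ)/3) < 2*c/(3*M) := by
    have h1 : (r₁ - x) ^ ((1:ℝ)/3) < K ^ ((1:ℝ)/3) :=
      Real.rpow_lt_rpow ht₀pos.le ht₀K (by norm_num)
    have h2 : K ^ ((1:ℝ)/3) = 2*c/(3*M) := by
      rw [hKdef, ← Real.rpow_natCast (2*c/(3*M)) 3, ← Real.rpow_mul hApos.le]
      norm_num
    linarith
  have hinv : 3*M/(2*c) < ((r₁ - x) ^ ((1:ℝ)/3))⁻¹ := by
    have := one_div_lt_one_div_of_lt hrpos hcub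
    rw [one_div_div] at this
    rw [inv_eq_one_div]
    linarith
  have hmain : M < c * (2/3 * (r₁ - x) ^ (-(1:ℝ)/3)) := by
    have hre : (r₁ - x) ^ (-(1:ℝ)/3) = ((r₁ - x) ^ ((1:ℝ)/3))⁻¹ := by
      rw [neg_div, Real.rpow_neg ht₀pos.le]
    rw [hre]
    have h3 : (2:ℝ)/3 * (3*M/(2*c)) < 2/3 * ((r₁ - x) ^ ((1:ℝ)/3))⁻¹ := by linarith
    have h4 := mul_lt_mul_of_pos_left h3 hcpos
    have hMeq : c * ((2:ℝ)/3 * (3*M/(2*c))) = M := by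
      field_simp
    linarith
  have hgpos : 0 < (g ((x : ℝ), (r₂ : ℝ))).1 := by rw [hkey]; linarith
  exact ⟨hgpos, mul_pos (by linarith : (0:ℝ) < x) hgpos⟩

lemma case_neg (r₁ r₂ l δ c : ℝ) (hr₁ : 0 < r₁) (hr₂ : 0 < r₂) (hl : 1 < l)
    (hδ : 0 < δ)
    (u w : ℝ × ℝ → ℝ) (g gw : ℝ × ℝ → ℝ × ℝ)
    (hC2 : ContDiffOn ℝ 2 u (Dom r₁ r₂ l))
    (hg : ContinuousOn g (closure (Dom r₁ r₂ l) \ Verts r₁ r₂))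
    (hgrad : IsGradOn u g (Dom r₁ r₂ l))
    (hgw : ContinuousOn gw (closure (Dom r₁ r₂ l ∩ Metric.ball (r₁, r₂) δ)))
    (hgradw : IsGradOn w gw (Dom r₁ r₂ l ∩ Metric.ball (r₁, r₂) δ))
    (hdecomp : ∀ ρ θ : ℝ, 0 < ρ → 0 ≤ θ → θ ≤ 3 * π / 2 →
      (r₁ + ρ * Real.sin θ, r₂ - ρ * Real.cos θ) ∈ Dom r₁ r₂ l ∩ Metric.ball (r₁, r₂) δ →
      u (r₁ + ρ * Real.sin θ, r₂ - ρ * Real.cos θ) =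
        c * ρ ^ ((2 : ℝ) / 3) * Real.cos (2 * θ / 3) +
          w (r₁ + ρ * Real.sin θ, r₂ - ρ * Real.cos θ))
    (hcneg : c < 0) :
    ∃ δ₁ > 0, ∀ y ∈ Ioo (r₂ - δ₁) r₂, 0 < (g (r₁, y)).2 ∧ 0 < y * (g (r₁, y)).2 := by
  set δ' := min δ (min r₁ r₂) with hδ'def
  have hδ'pos : 0 < δ' := lt_min hδ (lt_min hr₁ hr₂)
  have hδ'δ : δ' ≤ δ := min_le_left _ _
  have hδ'r₁ : δ' ≤ r₁ := (min_le_right _ _).trans (min_le_left _ _)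
  have hδ'r₂ : δ' ≤ r₂ := (min_le_right _ _).trans (min_le_right _ _)
  set tb := min (δ'/2) ((l-1)*r₁) with htbdef
  have htb : 0 < tb := lt_min (by linarith) (mul_pos (by linarith) hr₁)
  have hIoo : Ioo (0:ℝ) tb ∈ nhdsWithin (0:ℝ) (Ioi 0) :=
    Ioo_mem_nhdsGT_of_mem ⟨le_refl 0, htb⟩
  have hmem : ∀ y₀, r₂ - δ'/2 < y₀ → y₀ ≤ r₂ → ∀ t ∈ Ioo (0:ℝ) tb,
      ((r₁ + t, y₀) : ℝ × ℝ) ∈ Dom r₁ r₂ l ∩ Metric.ball (r₁, r₂) δ' := by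
    intro y₀ hy₁ hy₂ t ht
    obtain ⟨ht0, ht1⟩ := ht
    have ht1a : t < δ'/2 := lt_of_lt_of_le ht1 (min_le_left _ _)
    have ht1b : t < (l-1)*r₁ := lt_of_lt_of_le ht1 (min_le_right _ _)
    have hlr₁ : r₁ < l * r₁ := by nlinarith
    have hlr₂ : r₂ < l * r₂ := by nlinarith
    refine ⟨⟨⟨⟨?_, ?_⟩, ?_, ?_⟩, ?_⟩, ?_⟩
    · show -(l * r₁) < r₁ + t; linarith
    · show r₁ + t < l * r₁; linarith
    · show -(l * r₂) < y₀; linarith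
    · show y₀ < l * r₂; linarith
    · intro hcon
      have h2 : r₁ + t ≤ r₁ := hcon.1.2
      linarith
    · rw [Metric.mem_ball, Prod.dist_eq]
      apply max_lt
      · show dist (r₁ + t) r₁ < δ'
        rw [Real.dist_eq, abs_lt]; constructor <;> linarith
      · show dist y₀ r₂ < δ'
        rw [Real.dist_eq, abs_lt]; constructor <;> linarith
  have hFt : ∀ y₀ : ℝ, Filter.Tendsto (fun t : ℝ => ((r₁ + t, y₀) : ℝ × ℝ))
      (nhdsWithin 0 (Ioi 0)) (nhds (r₁, y₀)) := by
    intro y₀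
    have hc : Continuous (fun t : ℝ => ((r₁ + t, y₀) : ℝ × ℝ)) := by fun_prop
    have h0 : Filter.Tendsto (fun t : ℝ => ((r₁ + t, y₀) : ℝ × ℝ)) (nhdsWithin 0 (Ioi 0))
        (nhds (r₁ + 0, y₀)) := (hc.tendsto 0).mono_left nhdsWithin_le_nhds
    simpa using h0
  have hclos : ∀ y₀, r₂ - δ'/2 < y₀ → y₀ ≤ r₂ →
      ((r₁, y₀) : ℝ × ℝ) ∈ closure (Dom r₁ r₂ l ∩ Metric.ball (r₁, r₂) δ) := by
    intro y₀ h1 h2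
    refine mem_closure_of_tendsto (hFt y₀) ?_
    filter_upwards [hIoo] with t ht
    exact ⟨(hmem y₀ h1 h2 t ht).1, Metric.ball_subset_ball hδ'δ (hmem y₀ h1 h2 t ht).2⟩
  have hclosD : ∀ y₀, r₂ - δ'/2 < y₀ → y₀ ≤ r₂ →
      ((r₁, y₀) : ℝ × ℝ) ∈ closure (Dom r₁ r₂ l) := by
    intro y₀ h1 h2
    refine mem_closure_of_tendsto (hFt y₀) ?_
    filter_upwards [hIoo] with t ht
    exact (hmem y₀ h1 h2 t ht).1
  have key : ∀ y₀, r₂ - δ'/2 < y₀ → y₀ < r₂ →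
      (g (r₁, y₀)).2 = c * (-(2/3) * (r₂ - y₀) ^ (-(1:ℝ)/3)) + (gw (r₁, y₀)).2 := by
    intro y₀ h1 h2
    have hy₀pos : 0 < y₀ := by linarith
    have hT1 : Filter.Tendsto (fun t => (g (r₁ + t, y₀)).2) (nhdsWithin 0 (Ioi 0))
        (nhds ((g (r₁, y₀)).2)) := by
      have hmemq : ((r₁, y₀) : ℝ × ℝ) ∈ closure (Dom r₁ r₂ l) \ Verts r₁ r₂ :=
        ⟨hclosD y₀ h1 h2.le, not_vert_of_lt' r₁ r₂ y₀ hr₁ hy₀pos h2⟩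
      have hmap : Filter.Tendsto (fun t : ℝ => ((r₁ + t, y₀) : ℝ × ℝ))
          (nhdsWithin 0 (Ioi 0))
          (nhdsWithin (r₁, y₀) (closure (Dom r₁ r₂ l) \ Verts r₁ r₂)) := by
        rw [tendsto_nhdsWithin_iff]
        refine ⟨hFt y₀, ?_⟩
        filter_upwards [hIoo] with t ht
        refine ⟨subset_closure (hmem y₀ h1 h2.le t ht).1, ?_⟩
        intro hv
        simp only [Verts, Set.mem_insert_iff, Set.mem_singleton_iff, Prod.mk.injEq] at hv
        obtain ⟨ht0, -⟩ := ht
        rcases hv with ⟨h,_⟩|⟨h,_⟩|⟨h,_⟩|⟨h,_⟩ <;> linarith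
      exact (continuous_snd.tendsto _).comp ((hg _ hmemq).tendsto.comp hmap)
    have hT2 : Filter.Tendsto (fun t => (gw (r₁ + t, y₀)).2) (nhdsWithin 0 (Ioi 0))
        (nhds ((gw (r₁, y₀)).2)) := by
      have hmap : Filter.Tendsto (fun t : ℝ => ((r₁ + t, y₀) : ℝ × ℝ))
          (nhdsWithin 0 (Ioi 0))
          (nhdsWithin (r₁, y₀) (closure (Dom r₁ r₂ l ∩ Metric.ball (r₁, r₂) δ))) := by
        rw [tendsto_nhdsWithin_iff]
        refine ⟨hFt y₀, ?_⟩
        filter_upwards [hIoo] with t ht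
        exact subset_closure ⟨(hmem y₀ h1 h2.le t ht).1,
          Metric.ball_subset_ball hδ'δ (hmem y₀ h1 h2.le t ht).2⟩
      exact (continuous_snd.tendsto _).comp ((hgw _ (hclos y₀ h1 h2.le)).tendsto.comp hmap)
    have hT3 := tendsto_Dc_vert r₁ r₂ y₀ (by linarith)
    have hR : Filter.Tendsto
        (fun t => c * (Dc r₁ r₂ (r₁ + t, y₀) * Complex.I).re + (gw (r₁ + t, y₀)).2)
        (nhdsWithin 0 (Ioi 0))
        (nhds (c * (-(2/3) * (r₂ - y₀) ^ (-(1:ℝ)/3)) + (gw (r₁, y₀)).2)) :=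
      (hT3.const_mul c).add hT2
    have heqev : ∀ᶠ t in nhdsWithin (0:ℝ) (Ioi 0),
        (g (r₁ + t, y₀)).2 = c * (Dc r₁ r₂ (r₁ + t, y₀) * Complex.I).re + (gw (r₁ + t, y₀)).2 := by
      filter_upwards [hIoo] with t ht
      exact (grad_id r₁ r₂ l δ δ' c hr₁ hr₂ hδ'δ hδ'r₁ hδ'r₂ u w g gw hC2 hgrad hgradw
        hdecomp _ (hmem y₀ h1 h2.le t ht)).2
    exact tendsto_nhds_unique hT1
      (hR.congr' (by filter_upwards [heqev] with t h; exact h.symm))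
  have hS₁ : ((r₁, r₂) : ℝ × ℝ) ∈ closure (Dom r₁ r₂ l ∩ Metric.ball (r₁, r₂) δ) :=
    hclos r₂ (by linarith) le_rfl
  have hcw := hgw _ hS₁
  rw [Metric.continuousWithinAt_iff] at hcw
  obtain ⟨η, hη, hcw⟩ := hcw 1 one_pos
  set M := |(gw ((r₁ : ℝ), (r₂ : ℝ))).2| + 1 with hMdef
  have hM : 0 < M := by positivity
  have hcpos : 0 < -c := by linarith
  set K := (2*(-c)/(3*M))^(3:ℕ) with hKdef
  have hApos : 0 < 2*(-c)/(3*M) := by positivity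
  have hK : 0 < K := by positivity
  refine ⟨min (δ'/2) (min η K), by positivity, ?_⟩
  rintro y ⟨hy1, hy2⟩
  have hδ₁a : min (δ'/2) (min η K) ≤ δ'/2 := min_le_left _ _
  have hδ₁b : min (δ'/2) (min η K) ≤ η := (min_le_right _ _).trans (min_le_left _ _)
  have hδ₁c : min (δ'/2) (min η K) ≤ K := (min_le_right _ _).trans (min_le_right _ _)
  have ht₀pos : 0 < r₂ - y := by linarith
  have hyδ' : r₂ - δ'/2 < y := by linarith
  have hkey := key y hyδ' hy2
  have hmemq2 := hclos y hyδ' hy2.le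
  have hdistq : dist ((r₁, y) : ℝ × ℝ) ((r₁ : ℝ), (r₂ : ℝ)) < η := by
    rw [Prod.dist_eq]
    apply max_lt
    · simp [hη]
    · show dist y r₂ < η
      rw [Real.dist_eq, abs_lt]; constructor <;> linarith
  have hgwb := hcw hmemq2 hdistq
  have hgwb1 : |(gw ((r₁ : ℝ), (y : ℝ))).2 - (gw ((r₁ : ℝ), (r₂ : ℝ))).2| < 1 := by
    calc |(gw ((r₁ : ℝ), (y : ℝ))).2 - (gw ((r₁ : ℝ), (r₂ : ℝ))).2|
        = dist ((gw ((r₁ : ℝ), (y : ℝ))).2) ((gw ((r₁ : ℝ), (r₂ : ℝ))).2) := (Real.dist_eq _ _).symm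
      _ ≤ dist (gw ((r₁ : ℝ), (y : ℝ))) (gw ((r₁ : ℝ), (r₂ : ℝ))) := by
          rw [Prod.dist_eq]; exact le_max_right _ _
      _ < 1 := hgwb
  have hgwlb : -M ≤ (gw ((r₁ : ℝ), (y : ℝ))).2 := by
    have h1 := (abs_lt.mp hgwb1).1
    have h2 := neg_abs_le ((gw ((r₁ : ℝ), (r₂ : ℝ))).2)
    rw [hMdef]; linarith
  have ht₀K : r₂ - y < K := by linarith
  have hrpos : (0:ℝ) < (r₂ - y) ^ ((1:ℝ)/3) := Real.rpow_pos_of_pos ht₀pos _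
  have hcub : (r₂ - y) ^ ((1:ℝ)/3) < 2*(-c)/(3*M) := by
    have h1 : (r₂ - y) ^ ((1:ℝ)/3) < K ^ ((1:ℝ)/3) :=
      Real.rpow_lt_rpow ht₀pos.le ht₀K (by norm_num)
    have h2 : K ^ ((1:ℝ)/3) = 2*(-c)/(3*M) := by
      rw [hKdef, ← Real.rpow_natCast (2*(-c)/(3*M)) 3, ← Real.rpow_mul hApos.le]
      norm_num
    linarith
  have hinv : 3*M/(2*(-c)) < ((r₂ - y) ^ ((1:ℝ)/3))⁻¹ := by
    have := one_div_lt_one_div_of_lt hrpos hcub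
    rw [one_div_div] at this
    rw [inv_eq_one_div]
    linarith
  have hmain : M < (-c) * (2/3 * (r₂ - y) ^ (-(1:ℝ)/3)) := by
    have hre : (r₂ - y) ^ (-(1:ℝ)/3) = ((r₂ - y) ^ ((1:ℝ)/3))⁻¹ := by
      rw [neg_div, Real.rpow_neg ht₀pos.le]
    rw [hre]
    have h3 : (2:ℝ)/3 * (3*M/(2*(-c))) < 2/3 * ((r₂ - y) ^ ((1:ℝ)/3))⁻¹ := by linarith
    have h4 := mul_lt_mul_of_pos_left h3 hcpos
    have hc0 : c ≠ 0 := ne_of_lt hcneg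
    have hMeq : (-c) * ((2:ℝ)/3 * (3*M/(2*(-c)))) = M := by
      field_simp
    linarith
  have hrw : c * (-(2/3) * (r₂ - y) ^ (-(1:ℝ)/3))
      = (-c) * (2/3 * (r₂ - y) ^ (-(1:ℝ)/3)) := by ring
  have hgpos : 0 < (g ((r₁ : ℝ), (y : ℝ))).2 := by rw [hkey, hrw]; linarith
  exact ⟨hgpos, mul_pos (by linarith : (0:ℝ) < y) hgpos⟩

end AuxStmt2

/-- if the singular coefficient `c` is nonzero, Berg's effect fails near `S₁`. -/
theorem stmt_2 (r₁ r₂ l a b : ℝ) (hr₁ : 0 < r₁) (hr₂ : 0 < r₂) (hl : 1 < l)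
    (ha : 0 < a) (hb : 0 < b)
    (u : ℝ × ℝ → ℝ) (g : ℝ × ℝ → ℝ × ℝ)
    (hu : ContinuousOn u (closure (Dom r₁ r₂ l)))
    (hharm : IsHarmonicOn u (Dom r₁ r₂ l))
    (hg : ContinuousOn g (closure (Dom r₁ r₂ l) \ Verts r₁ r₂))
    (hgrad : IsGradOn u g (Dom r₁ r₂ l))
    (hdata : MixedData r₁ r₂ a b g)
    (δ : ℝ) (hδ : 0 < δ) (c : ℝ) (hc : c ≠ 0)
    (w : ℝ × ℝ → ℝ) (gw : ℝ × ℝ → ℝ × ℝ)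
    (hw : ContinuousOn w (closure (Dom r₁ r₂ l ∩ Metric.ball (r₁, r₂) δ)))
    (hgw : ContinuousOn gw (closure (Dom r₁ r₂ l ∩ Metric.ball (r₁, r₂) δ)))
    (hgradw : IsGradOn w gw (Dom r₁ r₂ l ∩ Metric.ball (r₁, r₂) δ))
    (hwx : (gw (r₁, r₂)).1 < 0) (hwy : (gw (r₁, r₂)).2 < 0)
    (hdecomp : ∀ ρ θ : ℝ, 0 < ρ → 0 ≤ θ → θ ≤ 3 * π / 2 →
      (r₁ + ρ * Real.sin θ, r₂ - ρ * Real.cos θ) ∈ Dom r₁ r₂ l ∩ Metric.ball (r₁, r₂) δ →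
      u (r₁ + ρ * Real.sin θ, r₂ - ρ * Real.cos θ) =
        c * ρ ^ ((2 : ℝ) / 3) * Real.cos (2 * θ / 3) +
          w (r₁ + ρ * Real.sin θ, r₂ - ρ * Real.cos θ)) :
    (0 < c → ∃ δ₁ > 0, ∀ x ∈ Ioo (r₁ - δ₁) r₁,
      0 < (g (x, r₂)).1 ∧ 0 < x * (g (x, r₂)).1) ∧
    (c < 0 → ∃ δ₁ > 0, ∀ y ∈ Ioo (r₂ - δ₁) r₂,
      0 < (g (r₁, y)).2 ∧ 0 < y * (g (r₁, y)).2) := by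
  constructor
  · intro hcpos
    exact case_pos r₁ r₂ l δ c hr₁ hr₂ hl hδ u w g gw hharm.1 hg hgrad hgw hgradw hdecomp hcpos
  · intro hcneg
    exact case_neg r₁ r₂ l δ c hr₁ hr₂ hl hδ u w g gw hharm.1 hg hgrad hgw hgradw hdecomp hcneg
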